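/- arXiv:2401.04436 — 2 statements merged into one kernel-verified Lean document; each statement's English description precedes it below -/
import Mathlib

section
/- The flux Q(ρ) = ρ·V(ρ) is strictly increasing on (0, ρ_cr) and strictly decreasing on (ρ_cr, ∞). -/
lemma flux_hasDerivAt (v_max ρ_cr a : ℝ) (hρ : 0 < ρ_cr) (ha : 0 < a)
    {x : ℝ} (hx : 0 < x) :
    HasDerivAt (fun ρ : ℝ => ρ * v_max * Real.exp (-(1/a) * (ρ/ρ_cr) ^ a))
      (v_max * Real.exp (-(1/a) * (x/ρ_cr) ^ a) * (1 - (x/ρ_cr) ^ a)) x := by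
  have hdiv : HasDerivAt (fun ρ : ℝ => ρ / ρ_cr) (1 / ρ_cr) x := by
    simpa [div_eq_mul_inv] using (hasDerivAt_id x).mul_const ρ_cr⁻¹
  have hbpos : (0:ℝ) < x / ρ_cr := by positivity
  have hpow : HasDerivAt (fun ρ : ℝ => (ρ/ρ_cr) ^ a)
      (a * (x/ρ_cr) ^ (a - 1) * (1 / ρ_cr)) x :=
    by have := (Real.hasDerivAt_rpow_const (x := x/ρ_cr) (p := a) (Or.inl hbpos.ne')).comp x hdiv; exact this
  have hg : HasDerivAt (fun ρ : ℝ => -(1/a) * (ρ/ρ_cr) ^ a)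
      (-(1/a) * (a * (x/ρ_cr) ^ (a - 1) * (1 / ρ_cr))) x := hpow.const_mul _
  have hexp : HasDerivAt (fun ρ : ℝ => Real.exp (-(1/a) * (ρ/ρ_cr) ^ a))
      (Real.exp (-(1/a) * (x/ρ_cr) ^ a) *
        (-(1/a) * (a * (x/ρ_cr) ^ (a - 1) * (1 / ρ_cr)))) x := hg.exp
  have hlin : HasDerivAt (fun ρ : ℝ => ρ * v_max) v_max x := by
    simpa using (hasDerivAt_id x).mul_const v_max
  have h : HasDerivAt (fun ρ : ℝ => ρ * v_max * Real.exp (-(1/a) * (ρ/ρ_cr) ^ a)) _ x := hlin.mul hexp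
  convert h using 1
  have key : (x/ρ_cr) * (x/ρ_cr) ^ (a - 1) = (x/ρ_cr) ^ a := by
    rw [show a = 1 + (a - 1) by ring, Real.rpow_add hbpos, Real.rpow_one]
    ring_nf
  have key' : x * (x/ρ_cr) ^ (a - 1) * (1/ρ_cr) = (x/ρ_cr) ^ a := by
    rw [← key]; field_simp
  rw [show -(1/a) * (a * (x/ρ_cr) ^ (a-1) * (1/ρ_cr)) = -((x/ρ_cr) ^ (a-1) * (1/ρ_cr))
      by field_simp]
  linear_combination (v_max * Real.exp (-(1/a) * (x/ρ_cr) ^ a)) * key'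

theorem flux_monotonicity
    (v_max ρ_cr a : ℝ) (hv : 0 < v_max) (hρ : 0 < ρ_cr) (ha : 0 < a) :
    StrictMonoOn (fun ρ : ℝ => ρ * v_max * Real.exp (-(1/a) * (ρ/ρ_cr) ^ a))
        (Set.Ioo 0 ρ_cr) ∧
    StrictAntiOn (fun ρ : ℝ => ρ * v_max * Real.exp (-(1/a) * (ρ/ρ_cr) ^ a))
        (Set.Ioi ρ_cr) := by
  constructor
  · apply strictMonoOn_of_deriv_pos (convex_Ioo 0 ρ_cr)
    · intro x hx
      exact ((flux_hasDerivAt v_max ρ_cr a hρ ha hx.1).continuousAt).continuousWithinAt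
    · intro x hx
      rw [interior_Ioo] at hx
      rw [(flux_hasDerivAt v_max ρ_cr a hρ ha hx.1).deriv]
      have h1 : (x/ρ_cr) ^ a < 1 :=
        Real.rpow_lt_one (div_pos hx.1 hρ).le (by rw [div_lt_one hρ]; exact hx.2) ha
      have h2 := Real.exp_pos (-(1/a) * (x/ρ_cr) ^ a)
      exact mul_pos (mul_pos hv h2) (by linarith)
  · apply strictAntiOn_of_deriv_neg (convex_Ioi ρ_cr)
    · intro x hx
      exact ((flux_hasDerivAt v_max ρ_cr a hρ ha (hρ.trans hx)).continuousAt).continuousWithinAt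
    · intro x hx
      rw [interior_Ioi] at hx
      have hx' : 0 < x := hρ.trans hx
      rw [(flux_hasDerivAt v_max ρ_cr a hρ ha hx').deriv]
      have h1 : 1 < (x/ρ_cr) ^ a :=
        (Real.one_lt_rpow_iff_of_pos (by positivity)).mpr
          (Or.inl ⟨by rw [lt_div_iff₀ hρ]; simpa using hx, ha⟩)
      have h2 := Real.exp_pos (-(1/a) * (x/ρ_cr) ^ a)
      have : (0:ℝ) < v_max * Real.exp (-(1/a) * (x/ρ_cr) ^ a) * ((x/ρ_cr) ^ a - 1) :=
        mul_pos (mul_pos hv h2) (by linarith)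
      linarith [this]
end

section
/- The maximum flux is Q(ρ_cr) = v_max · ρ_cr · e^{−1/a}, i.e., for all ρ > 0, ρ·V(ρ) ≤ v_max · ρ_cr · exp(−1/a), with equality iff ρ = ρ_cr. -/
theorem flux_max
    (v_max ρ_cr a : ℝ) (hv : 0 < v_max) (hρ : 0 < ρ_cr) (ha : 0 < a) :
    ∀ ρ : ℝ, 0 < ρ →
      ρ * (v_max * Real.exp (-(1/a) * (ρ/ρ_cr) ^ a))
          ≤ v_max * ρ_cr * Real.exp (-1/a) ∧
      (ρ * (v_max * Real.exp (-(1/a) * (ρ/ρ_cr) ^ a))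
          = v_max * ρ_cr * Real.exp (-1/a) ↔ ρ = ρ_cr) := by
  intro ρ hρpos
  have ha' : a ≠ 0 := ne_of_gt ha
  set x := ρ / ρ_cr with hx
  have hxpos : 0 < x := div_pos hρpos hρ
  have htpos : 0 < x ^ a := Real.rpow_pos_of_pos hxpos a
  have hlog : Real.log (x ^ a) = a * Real.log x := Real.log_rpow hxpos a
  have hb : 0 < 1/a := by positivity
  -- key exponent inequality
  have h : Real.log (x ^ a) ≤ x ^ a - 1 := Real.log_le_sub_one_of_pos htpos
  rw [hlog] at h
  have h2 : (1/a) * (a * Real.log x) ≤ (1/a) * (x ^ a - 1) :=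
    mul_le_mul_of_nonneg_left h hb.le
  rw [← mul_assoc, one_div_mul_cancel ha', one_mul] at h2
  have hexp_le : Real.log x + -(1/a) * x ^ a ≤ -1/a := by
    have : (1/a) * (x ^ a - 1) = (1/a) * x ^ a - 1/a := by ring
    rw [this] at h2
    ring_nf at h2 ⊢
    linarith
  -- rewrite LHS
  have hρeq : ρ = ρ_cr * x := by rw [hx, mul_div_assoc', eq_div_iff hρ.ne', mul_comm]
  have hmain : ρ * (v_max * Real.exp (-(1/a) * x ^ a))
      = v_max * ρ_cr * Real.exp (Real.log x + -(1/a) * x ^ a) := by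
    rw [Real.exp_add, Real.exp_log hxpos, hρeq]; ring
  have heqiff : Real.log x + -(1/a) * x ^ a = -1/a ↔ x = 1 := by
    constructor
    · intro hEq
      by_contra hxne
      have hta : x ^ a ≠ 1 := by
        intro h1
        apply hxne
        have := congrArg (fun y => y ^ (1/a)) h1
        simpa [← Real.rpow_natCast, ← Real.rpow_mul hxpos.le,
          mul_inv_cancel₀ ha', Real.rpow_one, Real.one_rpow] using this
      have hlt : Real.log (x ^ a) < x ^ a - 1 :=
        Real.log_lt_sub_one_of_pos htpos hta
      rw [hlog] at hlt
      have h2' : (1/a) * (a * Real.log x) < (1/a) * (x ^ a - 1) :=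
        (mul_lt_mul_iff_right₀ hb).mpr hlt
      rw [← mul_assoc, one_div_mul_cancel ha', one_mul] at h2'
      have : (1/a) * (x ^ a - 1) = (1/a) * x ^ a - 1/a := by ring
      rw [this] at h2'
      have : Real.log x + -(1/a) * x ^ a < -1/a := by ring_nf at h2' ⊢; linarith
      linarith [hEq ▸ this]
    · intro hx1
      rw [hx1]
      simp [Real.rpow_natCast]
      ring
  constructor
  · rw [hmain]
    exact mul_le_mul_of_nonneg_left (Real.exp_le_exp.mpr hexp_le)
      (by positivity)
  · rw [hmain]
    constructor
    · intro hEq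
      have h3 : Real.exp (Real.log x + -(1/a) * x ^ a) = Real.exp (-1/a) :=
        mul_left_cancel₀ (by positivity : v_max * ρ_cr ≠ 0) hEq
      have h4 : Real.log x + -(1/a) * x ^ a = -1/a := Real.exp_injective h3
      have hx1 : x = 1 := heqiff.mp h4
      have : ρ / ρ_cr = 1 := hx1
      field_simp at this
      exact this
    · intro hρρ
      have hx1 : x = 1 := by rw [hx, hρρ, div_self hρ.ne']
      rw [heqiff.mpr hx1]
end
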